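/- Let A and B be m×n real matrices. Then AAᵀ = BBᵀ and AᵀA = BᵀB if and only if there exist orthogonal matrices U₁, U₂ (m×m) and V (n×n), and a rectangular diagonal matrix Σ of singular values, such that A = U₁ Σ Vᵀ, B = U₂ Σ Vᵀ, and U₂ᵀU₁ commutes with ΣΣᵀ. -/

import Mathlib

open Matrix

noncomputable section

lemma key {m n : ℕ} (M : Matrix (Fin m) (Fin n) ℝ) (V : Matrix (Fin n) (Fin n) ℝ)
    (μ : Fin n → ℝ) (hV : Vᵀ * V = 1) (hμ0 : ∀ j, 0 ≤ μ j)
    (hμm : ∀ j : Fin n, m ≤ (j : ℕ) → μ j = 0)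
    (hM : Mᵀ * M = V * diagonal μ * Vᵀ) :
    ∃ U : Matrix (Fin m) (Fin m) ℝ, Uᵀ * U = 1 ∧
      M = U * (Matrix.of fun (i : Fin m) (j : Fin n) =>
        if (i : ℕ) = (j : ℕ) then Real.sqrt (μ j) else 0) * Vᵀ := by
  have hVV : V * Vᵀ = 1 := mul_eq_one_comm.mpr hV
  set C := M * V with hCdef
  have hC : Cᵀ * C = diagonal μ := by
    have h0 : Cᵀ * C = Vᵀ * (Mᵀ * M) * V := by
      rw [hCdef, Matrix.transpose_mul]; simp only [Matrix.mul_assoc]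
    rw [h0, hM]
    rw [show Vᵀ * (V * diagonal μ * Vᵀ) * V = Vᵀ * V * diagonal μ * (Vᵀ * V) by
      simp only [Matrix.mul_assoc], hV, Matrix.one_mul, Matrix.mul_one]
  have hcol : ∀ j j' : Fin n, (∑ k, C k j * C k j') = if j = j' then μ j else 0 := by
    intro j j'
    have h := congrFun (congrFun hC j) j'
    simpa [Matrix.mul_apply, Matrix.diagonal_apply] using h
  have hzero : ∀ j : Fin n, μ j = 0 → ∀ k, C k j = 0 := by
    intro j hj k
    have h := hcol j j
    rw [if_pos rfl, hj] at h
    have hnn : ∀ x ∈ Finset.univ, 0 ≤ C x j * C x j := fun x _ => mul_self_nonneg _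
    exact mul_self_eq_zero.mp ((Finset.sum_eq_zero_iff_of_nonneg hnn).mp h k (Finset.mem_univ k))
  -- candidate orthonormal family
  set w : Fin m → EuclideanSpace ℝ (Fin m) := fun i =>
    if h : (i : ℕ) < n then
      (Real.sqrt (μ ⟨i, h⟩))⁻¹ • ((WithLp.equiv 2 _).symm fun k => C k ⟨i, h⟩)
    else 0 with hwdef
  set s : Set (Fin m) := {i | ∃ h : (i : ℕ) < n, μ ⟨i, h⟩ ≠ 0} with hsdef
  have horth : Orthonormal ℝ (s.restrict w) := by
    rw [orthonormal_iff_ite]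
    rintro ⟨i, h1, h2⟩ ⟨i', h1', h2'⟩
    have hwi : w i = (Real.sqrt (μ ⟨i, h1⟩))⁻¹ • ((WithLp.equiv 2 _).symm fun k => C k ⟨i, h1⟩) := by
      rw [hwdef]; exact dif_pos h1
    have hwi' : w i' = (Real.sqrt (μ ⟨i', h1'⟩))⁻¹ • ((WithLp.equiv 2 _).symm fun k => C k ⟨i', h1'⟩) := by
      rw [hwdef]; exact dif_pos h1'
    simp only [Set.restrict, Set.domRestrict_apply, hwi, hwi', real_inner_smul_left, real_inner_smul_right]
    have hinner : (inner ℝ ((WithLp.equiv 2 (Fin m → ℝ)).symm fun k => C k ⟨i, h1⟩)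
        ((WithLp.equiv 2 (Fin m → ℝ)).symm fun k => C k ⟨i', h1'⟩) : ℝ)
        = ∑ k, C k ⟨i, h1⟩ * C k ⟨i', h1'⟩ := by
      rw [PiLp.inner_apply]
      simp [mul_comm]
    rw [hinner, hcol]
    by_cases hii : i = i'
    · subst hii
      rw [if_pos rfl, if_pos rfl]
      have hs : Real.sqrt (μ ⟨i, h1⟩) ≠ 0 := by
        intro h; exact h2 (by rwa [Real.sqrt_eq_zero (hμ0 _)] at h)
      field_simp
      rw [Real.sq_sqrt (hμ0 _)]
    · have hne : (⟨(i : ℕ), h1⟩ : Fin n) ≠ ⟨(i' : ℕ), h1'⟩ := by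
        simp only [ne_eq, Fin.mk.injEq]
        exact fun h => hii (Fin.ext h)
      rw [if_neg hne, if_neg (by simp [Subtype.ext_iff, hii])]
      ring
  have hcard : Module.finrank ℝ (EuclideanSpace ℝ (Fin m)) = Fintype.card (Fin m) := by simp
  obtain ⟨b, hb⟩ := horth.exists_orthonormalBasis_extension_of_card_eq hcard
  set U : Matrix (Fin m) (Fin m) ℝ := Matrix.of fun k i => b i k with hUdef
  have hU : Uᵀ * U = 1 := by
    ext i i'
    have h := (orthonormal_iff_ite.mp b.orthonormal) i i'
    rw [PiLp.inner_apply] at h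
    simp only [Matrix.mul_apply, Matrix.transpose_apply, hUdef, Matrix.of_apply, Matrix.one_apply]
    simpa [mul_comm] using h
  refine ⟨U, hU, ?_⟩
  have hMC : M = C * Vᵀ := by rw [hCdef, Matrix.mul_assoc, hVV, Matrix.mul_one]
  suffices hUD : C = U * (Matrix.of fun (i : Fin m) (j : Fin n) =>
      if (i : ℕ) = (j : ℕ) then Real.sqrt (μ j) else 0) by rw [hMC, hUD]
  ext k j
  rw [Matrix.mul_apply]
  simp only [hUdef, Matrix.of_apply, mul_ite, mul_zero]
  by_cases hj : (j : ℕ) < m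
  · have hsum : (∑ i : Fin m, if (i : ℕ) = (j : ℕ) then b i k * Real.sqrt (μ j) else 0)
        = b ⟨j, hj⟩ k * Real.sqrt (μ j) := by
      rw [Finset.sum_eq_single (⟨(j : ℕ), hj⟩ : Fin m)]
      · simp
      · intro i _ hi
        rw [if_neg (fun h => hi (Fin.ext h))]
      · intro h; exact absurd (Finset.mem_univ _) h
    rw [hsum]
    by_cases hμj : μ j = 0
    · rw [hzero j hμj k, hμj, Real.sqrt_zero, mul_zero]
    · have h1 : ((⟨(j : ℕ), hj⟩ : Fin m) : ℕ) < n := j.isLt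
      have hjj : (⟨((⟨(j : ℕ), hj⟩ : Fin m) : ℕ), h1⟩ : Fin n) = j := Fin.ext rfl
      have hmem : (⟨(j : ℕ), hj⟩ : Fin m) ∈ s := ⟨h1, by rw [hjj]; exact hμj⟩
      have hbw := hb _ hmem
      rw [hbw, hwdef]
      simp only [dif_pos h1, hjj]
      have hs : Real.sqrt (μ j) ≠ 0 := by
        intro h; exact hμj (by rwa [Real.sqrt_eq_zero (hμ0 _)] at h)
      have : ((Real.sqrt (μ j))⁻¹ • ((WithLp.equiv 2 (Fin m → ℝ)).symm fun k => C k j)) k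
          = (Real.sqrt (μ j))⁻¹ * C k j := by
        simp
      rw [this]
      field_simp
  · have hμj : μ j = 0 := hμm j (le_of_not_gt hj)
    rw [hzero j hμj k]
    symm
    apply Finset.sum_eq_zero
    intro i _
    have hi := i.isLt
    rw [if_neg (by omega)]
lemma spectral_sorted {m n : ℕ} (A : Matrix (Fin m) (Fin n) ℝ) :
    ∃ (V : Matrix (Fin n) (Fin n) ℝ) (μ : Fin n → ℝ),
      Vᵀ * V = 1 ∧ (∀ j, 0 ≤ μ j) ∧ (∀ j : Fin n, m ≤ (j : ℕ) → μ j = 0) ∧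
      Aᵀ * A = V * diagonal μ * Vᵀ := by
  have hPSD : (Aᵀ * A).PosSemidef := by
    have := Matrix.posSemidef_conjTranspose_mul_self A
    rwa [Matrix.conjTranspose_eq_transpose_of_trivial] at this
  have hG : (Aᵀ * A).IsHermitian := hPSD.1
  set lam := hG.eigenvalues with hlam
  have hlam0 : ∀ i, 0 ≤ lam i := fun i => hPSD.eigenvalues_nonneg i
  set W := (hG.eigenvectorUnitary : Matrix (Fin n) (Fin n) ℝ) with hW
  have hWtW : Wᵀ * W = 1 := by
    have h3 : star W = Wᵀ := by
      rw [Matrix.star_eq_conjTranspose, Matrix.conjTranspose_eq_transpose_of_trivial]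
    rw [← h3]; exact (Matrix.mem_unitaryGroup_iff').mp hG.eigenvectorUnitary.2
  have hspec : Aᵀ * A = W * diagonal lam * Wᵀ := by
    have h := hG.spectral_theorem
    have h2 : (RCLike.ofReal ∘ lam : Fin n → ℝ) = lam := by funext i; simp
    have h3 : star W = Wᵀ := by
      rw [Matrix.star_eq_conjTranspose, Matrix.conjTranspose_eq_transpose_of_trivial]
    rw [Unitary.conjStarAlgAut_apply, ← hlam, ← hW] at h
    rwa [h2, h3] at h
  set σ := Tuple.sort (fun j => -lam j) with hσ
  refine ⟨W.submatrix id σ, fun j => lam (σ j), ?_, fun j => hlam0 _, ?_, ?_⟩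
  · ext j j'
    have h := congrFun (congrFun hWtW (σ j)) (σ j')
    simp only [Matrix.mul_apply, Matrix.transpose_apply, Matrix.one_apply,
      Matrix.submatrix_apply, id] at h ⊢
    rw [h]
    simp [Equiv.apply_eq_iff_eq]
  · -- nonzero eigenvalues are pushed to the front
    have hrank : Fintype.card {i // lam i ≠ 0} ≤ m := by
      rw [← hG.rank_eq_card_non_zero_eigs, Matrix.rank_transpose_mul_self]
      simpa using A.rank_le_card_height
    intro j hj
    by_contra hne
    have hpos : ∀ k, k ≤ j → lam (σ k) ≠ 0 := by
      intro k hk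
      have hmono : -lam (σ k) ≤ -lam (σ j) := Tuple.monotone_sort (fun j => -lam j) hk
      have h0 : 0 < lam (σ j) := lt_of_le_of_ne (hlam0 _) (Ne.symm hne)
      intro hc
      rw [hc] at hmono
      simp only [neg_zero, neg_nonpos] at hmono
      linarith
    have hsub : Finset.Iic j ⊆ Finset.univ.filter (fun k => lam (σ k) ≠ 0) := by
      intro k hk
      simp only [Finset.mem_filter, Finset.mem_univ, true_and]
      exact hpos k (Finset.mem_Iic.mp hk)
    have h1 : (j : ℕ) + 1 ≤ (Finset.univ.filter (fun k => lam (σ k) ≠ 0)).card := by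
      have := Finset.card_le_card hsub
      rwa [Fin.card_Iic] at this
    have h2 : (Finset.univ.filter (fun k => lam (σ k) ≠ 0)).card
        = Fintype.card {i // lam i ≠ 0} := by
      rw [Fintype.card_subtype]
      apply Finset.card_bij (fun k _ => σ k)
      · intro k hk
        simp only [Finset.mem_filter, Finset.mem_univ, true_and] at hk ⊢
        exact hk
      · intro a _ b _ hab
        exact σ.injective hab
      · intro i hi
        refine ⟨σ.symm i, ?_, by simp⟩
        simp only [Finset.mem_filter, Finset.mem_univ, true_and] at hi ⊢
        simpa using hi
    omega
  · ext i j
    have entry : ∀ (X : Matrix (Fin n) (Fin n) ℝ) (d : Fin n → ℝ),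
        (X * diagonal d * Xᵀ) i j = ∑ k, X i k * d k * X j k := by
      intro X d
      rw [Matrix.mul_apply]
      apply Finset.sum_congr rfl
      intro k _
      rw [Matrix.mul_diagonal, Matrix.transpose_apply]
    have hl := congrFun (congrFun hspec i) j
    rw [hl, entry, entry]
    simp only [Matrix.submatrix_apply, id]
    exact (Equiv.sum_comp σ (fun k => W i k * lam k * W j k)).symm

lemma conj_eq {m : ℕ} (U₁ U₂ S : Matrix (Fin m) (Fin m) ℝ)
    (h2 : U₂ᵀ * U₂ = 1) (h1' : U₁ * U₁ᵀ = 1)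
    (h : (U₂ᵀ * U₁) * S = S * (U₂ᵀ * U₁)) : U₁ * S * U₁ᵀ = U₂ * S * U₂ᵀ := by
  have h2' : U₂ * U₂ᵀ = 1 := mul_eq_one_comm.mpr h2
  calc U₁ * S * U₁ᵀ = U₂ * ((U₂ᵀ * U₁) * S) * U₁ᵀ := by
        rw [show U₂ * (U₂ᵀ * U₁ * S) = (U₂ * U₂ᵀ) * (U₁ * S) by simp only [Matrix.mul_assoc],
          h2', Matrix.one_mul, Matrix.mul_assoc]
    _ = U₂ * (S * (U₂ᵀ * U₁)) * U₁ᵀ := by rw [h]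
    _ = U₂ * S * U₂ᵀ := by
        rw [show U₂ * (S * (U₂ᵀ * U₁)) * U₁ᵀ = U₂ * S * U₂ᵀ * (U₁ * U₁ᵀ) by
          simp only [Matrix.mul_assoc], h1', Matrix.mul_one]

lemma conj_eq' {m : ℕ} (U₁ U₂ S : Matrix (Fin m) (Fin m) ℝ)
    (h1 : U₁ᵀ * U₁ = 1) (h2 : U₂ᵀ * U₂ = 1)
    (h : U₁ * S * U₁ᵀ = U₂ * S * U₂ᵀ) : (U₂ᵀ * U₁) * S = S * (U₂ᵀ * U₁) := by
  have h2' : U₂ * U₂ᵀ = 1 := mul_eq_one_comm.mpr h2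
  calc (U₂ᵀ * U₁) * S = U₂ᵀ * (U₁ * S * U₁ᵀ) * U₁ := by
        rw [show U₂ᵀ * (U₁ * S * U₁ᵀ) * U₁ = (U₂ᵀ * U₁) * S * (U₁ᵀ * U₁) by
          simp only [Matrix.mul_assoc], h1, Matrix.mul_one]
    _ = U₂ᵀ * (U₂ * S * U₂ᵀ) * U₁ := by rw [h]
    _ = S * (U₂ᵀ * U₁) := by
        rw [show U₂ᵀ * (U₂ * S * U₂ᵀ) * U₁ = (U₂ᵀ * U₂) * (S * (U₂ᵀ * U₁)) by
          simp only [Matrix.mul_assoc], h2, Matrix.one_mul]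

lemma prod_self {m n : ℕ} (U : Matrix (Fin m) (Fin m) ℝ) (D : Matrix (Fin m) (Fin n) ℝ)
    (V : Matrix (Fin n) (Fin n) ℝ) (hV : Vᵀ * V = 1) :
    (U * D * Vᵀ) * (U * D * Vᵀ)ᵀ = U * (D * Dᵀ) * Uᵀ := by
  rw [Matrix.transpose_mul, Matrix.transpose_mul, Matrix.transpose_transpose]
  rw [show U * D * Vᵀ * (V * (Dᵀ * Uᵀ)) = U * D * (Vᵀ * V) * (Dᵀ * Uᵀ) by
    simp only [Matrix.mul_assoc], hV, Matrix.mul_one]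
  simp only [Matrix.mul_assoc]

lemma prod_self' {m n : ℕ} (U : Matrix (Fin m) (Fin m) ℝ) (D : Matrix (Fin m) (Fin n) ℝ)
    (V : Matrix (Fin n) (Fin n) ℝ) (hU : Uᵀ * U = 1) :
    (U * D * Vᵀ)ᵀ * (U * D * Vᵀ) = V * (Dᵀ * D) * Vᵀ := by
  rw [Matrix.transpose_mul, Matrix.transpose_mul, Matrix.transpose_transpose]
  rw [show V * (Dᵀ * Uᵀ) * (U * D * Vᵀ) = V * Dᵀ * (Uᵀ * U) * (D * Vᵀ) by
    simp only [Matrix.mul_assoc], hU, Matrix.mul_one]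
  simp only [Matrix.mul_assoc]

theorem stmt1 (m n : ℕ) (A B : Matrix (Fin m) (Fin n) ℝ) :
    (A * Aᵀ = B * Bᵀ ∧ Aᵀ * A = Bᵀ * B) ↔
    ∃ (U₁ U₂ : Matrix (Fin m) (Fin m) ℝ) (V : Matrix (Fin n) (Fin n) ℝ)
      (D : Matrix (Fin m) (Fin n) ℝ),
      (U₁ * U₁ᵀ = 1 ∧ U₁ᵀ * U₁ = 1) ∧ (U₂ * U₂ᵀ = 1 ∧ U₂ᵀ * U₂ = 1) ∧
      (V * Vᵀ = 1 ∧ Vᵀ * V = 1) ∧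
      (∀ (i : Fin m) (j : Fin n), (i : ℕ) ≠ (j : ℕ) → D i j = 0) ∧ (∀ i j, 0 ≤ D i j) ∧
      A = U₁ * D * Vᵀ ∧ B = U₂ * D * Vᵀ ∧
      (U₂ᵀ * U₁) * (D * Dᵀ) = (D * Dᵀ) * (U₂ᵀ * U₁) := by
  constructor
  · rintro ⟨h1, h2⟩
    obtain ⟨V, μ, hVtV, hμ0, hμm, hA⟩ := spectral_sorted A
    have hB : Bᵀ * B = V * diagonal μ * Vᵀ := by rw [← h2]; exact hA
    obtain ⟨U₁, hU₁, hAd⟩ := key A V μ hVtV hμ0 hμm hA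
    obtain ⟨U₂, hU₂, hBd⟩ := key B V μ hVtV hμ0 hμm hB
    set D : Matrix (Fin m) (Fin n) ℝ := Matrix.of fun (i : Fin m) (j : Fin n) =>
      if (i : ℕ) = (j : ℕ) then Real.sqrt (μ j) else 0 with hD
    refine ⟨U₁, U₂, V, D, ⟨mul_eq_one_comm.mpr hU₁, hU₁⟩,
      ⟨mul_eq_one_comm.mpr hU₂, hU₂⟩,
      ⟨mul_eq_one_comm.mpr hVtV, hVtV⟩, ?_, ?_, hAd, hBd, ?_⟩
    · intro i j hij
      simp [hD, hij]
    · intro i j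
      simp only [hD, Matrix.of_apply]
      split
      · exact Real.sqrt_nonneg _
      · exact le_refl 0
    · apply conj_eq' U₁ U₂ (D * Dᵀ) hU₁ hU₂
      rw [← prod_self U₁ D V hVtV, ← prod_self U₂ D V hVtV, ← hAd, ← hBd]
      exact h1
  · rintro ⟨U₁, U₂, V, D, ⟨hU₁a, hU₁b⟩, ⟨hU₂a, hU₂b⟩, ⟨hVa, hVb⟩, _, _, hAd, hBd, hcomm⟩
    constructor
    · rw [hAd, hBd, prod_self U₁ D V hVb, prod_self U₂ D V hVb]
      exact conj_eq U₁ U₂ (D * Dᵀ) hU₂b hU₁a hcomm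
    · rw [hAd, hBd, prod_self' U₁ D V hU₁b, prod_self' U₂ D V hU₂b]
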